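/- The sequence f(0,2n) satisfies the asymptotic formula f(0,2n) ∼ 4ⁿ·n^{−3/2}/√π as n → ∞; that is, the quotient f(0,2n)·√π·n^{3/2}/4ⁿ tends to 1 as n tends to infinity. -/

import Mathlib

/-- The number of walks of length `n` on the nonnegative integers starting at `0`,
ending at `i`, with steps `+1` or `-1`. -/
noncomputable def walkCount (i n : ℕ) : ℕ :=
  Nat.card {w : Fin (n + 1) → ℕ //
    w 0 = 0 ∧ w (Fin.last n) = i ∧
    ∀ k : Fin n, ((w k.succ : ℤ) - (w k.castSucc : ℤ)).natAbs = 1}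

open DyckStep List

private def stepsOfWalk {N : ℕ} (w : Fin (N+1) → ℕ) : List DyckStep :=
  List.ofFn (fun k : Fin N => if w k.castSucc < w k.succ then U else D)

private lemma length_stepsOfWalk {N : ℕ} (w : Fin (N+1) → ℕ) :
    (stepsOfWalk w).length = N := by simp [stepsOfWalk]

private lemma stepsOfWalk_counts {N : ℕ} (w : Fin (N+1) → ℕ) (h0 : w 0 = 0)
    (hs : ∀ k : Fin N, ((w k.succ : ℤ) - (w k.castSucc : ℤ)).natAbs = 1) :
    ∀ k (hk : k ≤ N),
      ((stepsOfWalk w).take k).count U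
        = w ⟨k, Nat.lt_succ_of_le hk⟩ + ((stepsOfWalk w).take k).count D
      ∧ ((stepsOfWalk w).take k).count U + ((stepsOfWalk w).take k).count D = k := by
  intro k
  induction k with
  | zero =>
    intro hk
    have : (⟨0, Nat.lt_succ_of_le hk⟩ : Fin (N+1)) = 0 := rfl
    simp [this, h0]
  | succ k ih =>
    intro hk
    have hkN : k < N := hk
    obtain ⟨ih1, ih2⟩ := ih (le_of_lt hkN)
    have hlt : k < (stepsOfWalk w).length := by rw [length_stepsOfWalk]; exact hkN
    have htake : (stepsOfWalk w).take (k+1)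
        = (stepsOfWalk w).take k ++ [(stepsOfWalk w)[k]] := by
      rw [← List.take_concat_get hlt, List.concat_eq_append]
    have hget : (stepsOfWalk w)[k]
        = if w ⟨k, Nat.lt_succ_of_lt hkN⟩ < w ⟨k+1, Nat.succ_lt_succ hkN⟩ then U else D := by
      simp only [stepsOfWalk, List.getElem_ofFn]
      rfl
    have hstep := hs ⟨k, hkN⟩
    have hcs : (⟨k, hkN⟩ : Fin N).castSucc = ⟨k, Nat.lt_succ_of_lt hkN⟩ := rfl
    have hsu : (⟨k, hkN⟩ : Fin N).succ = ⟨k+1, Nat.succ_lt_succ hkN⟩ := rfl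
    rw [hcs, hsu] at hstep
    have hE : (⟨k+1, Nat.lt_succ_of_le hk⟩ : Fin (N+1)) = ⟨k+1, Nat.succ_lt_succ hkN⟩ := rfl
    have hE2 : (⟨k, Nat.lt_succ_of_le (le_of_lt hkN)⟩ : Fin (N+1))
        = ⟨k, Nat.lt_succ_of_lt hkN⟩ := rfl
    rw [hE2] at ih1
    rw [hE]
    rcases Nat.lt_or_ge (w ⟨k, Nat.lt_succ_of_lt hkN⟩) (w ⟨k+1, Nat.succ_lt_succ hkN⟩) with hc | hc
    · rw [htake, hget, if_pos hc]
      simp only [List.count_append, List.count_singleton', beq_iff_eq, reduceCtorEq,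
        if_true, if_false, ite_true, ite_false]
      constructor <;> omega
    · rw [htake, hget, if_neg (not_lt.mpr hc)]
      simp only [List.count_append, List.count_singleton', beq_iff_eq, reduceCtorEq,
        if_true, if_false, ite_true, ite_false]
      constructor <;> omega

private def WalkType (n : ℕ) :=
  {w : Fin (2*n + 1) → ℕ //
    w 0 = 0 ∧ w (Fin.last (2*n)) = 0 ∧
    ∀ k : Fin (2*n), ((w k.succ : ℤ) - (w k.castSucc : ℤ)).natAbs = 1}

private def walkToDyck (n : ℕ) (x : WalkType n) : {p : DyckWord // p.semilength = n} := by
  obtain ⟨w, h0, hl, hs⟩ := x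
  have key := stepsOfWalk_counts w h0 hs
  have hlast : w ⟨2*n, Nat.lt_succ_of_le le_rfl⟩ = 0 := hl
  have hN := key (2*n) le_rfl
  refine ⟨⟨stepsOfWalk w, ?_, ?_⟩, ?_⟩
  · rw [List.take_of_length_le (by rw [length_stepsOfWalk])] at hN
    omega
  · intro i
    rcases le_or_gt i (2*n) with hi | hi
    · have := key i hi
      omega
    · rw [List.take_of_length_le (by rw [length_stepsOfWalk]; omega)]
      rw [List.take_of_length_le (by rw [length_stepsOfWalk])] at hN
      omega
  · show (stepsOfWalk w).count U = n
    rw [List.take_of_length_le (by rw [length_stepsOfWalk])] at hN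
    omega

private lemma walkToDyck_bijective (n : ℕ) : Function.Bijective (walkToDyck n) := by
  constructor
  · rintro ⟨w1, h01, hl1, hs1⟩ ⟨w2, h02, hl2, hs2⟩ h
    have hlist : stepsOfWalk w1 = stepsOfWalk w2 := congrArg (fun q => q.1.toList) h
    have k1 := stepsOfWalk_counts w1 h01 hs1
    have k2 := stepsOfWalk_counts w2 h02 hs2
    refine Subtype.ext (funext fun k => ?_)
    have hk : (k : ℕ) ≤ 2*n := Nat.lt_succ_iff.mp k.isLt
    have e1 := k1 k hk
    have e2 := k2 k hk
    rw [hlist] at e1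
    have : w1 ⟨k, Nat.lt_succ_of_le hk⟩ = w2 ⟨k, Nat.lt_succ_of_le hk⟩ := by omega
    simpa [Fin.eta] using this
  · rintro ⟨p, hp⟩
    have hlen : p.toList.length = 2*n := by
      rw [← p.two_mul_semilength_eq_length, hp]
    set w : Fin (2*n+1) → ℕ :=
      fun k => (p.toList.take k).count U - (p.toList.take k).count D with hw
    have hDU : ∀ i, (p.toList.take i).count D ≤ (p.toList.take i).count U :=
      p.count_D_le_count_U
    have h0 : w 0 = 0 := by simp [hw]
    have hl : w (Fin.last (2*n)) = 0 := by
      have : p.toList.take (2*n) = p.toList := by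
        rw [List.take_of_length_le (by omega)]
      simp only [hw, Fin.val_last, this, p.count_U_eq_count_D]
      omega
    have htake : ∀ k (hk : k < 2*n), p.toList.take (k+1)
        = p.toList.take k ++ [p.toList[k]'(by omega)] := by
      intro k hk
      rw [← List.take_concat_get (l := p.toList) (i := k) (by omega), List.concat_eq_append]
    have hs : ∀ k : Fin (2*n), ((w k.succ : ℤ) - (w k.castSucc : ℤ)).natAbs = 1 := by
      intro k
      have hk : (k : ℕ) < 2*n := k.isLt
      have hsucc : (w k.succ : ℕ) =
          (p.toList.take ((k:ℕ)+1)).count U - (p.toList.take ((k:ℕ)+1)).count D := rfl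
      have hcast : (w k.castSucc : ℕ) =
          (p.toList.take (k:ℕ)).count U - (p.toList.take (k:ℕ)).count D := rfl
      have hd1 := hDU (k:ℕ)
      have hd2 := hDU ((k:ℕ)+1)
      rw [htake k hk] at hsucc hd2
      rcases (p.toList[(k:ℕ)]'(by omega)).dichotomy with hu | hu <;>
        rw [hu] at hsucc hd2 <;>
        simp only [List.count_append, List.count_singleton', beq_iff_eq, reduceCtorEq,
          if_true, if_false, ite_true, ite_false] at hsucc hd2 <;>
        rw [hsucc, hcast] <;> omega
    refine ⟨⟨w, h0, hl, hs⟩, ?_⟩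
    refine Subtype.ext (DyckWord.ext ?_)
    show stepsOfWalk w = p.toList
    apply List.ext_getElem (by rw [length_stepsOfWalk, hlen])
    intro k hk1 hk2
    have hk : k < 2*n := by rwa [length_stepsOfWalk] at hk1
    have hget : (stepsOfWalk w)[k] =
        if w ⟨k, Nat.lt_succ_of_lt hk⟩ < w ⟨k+1, Nat.succ_lt_succ hk⟩ then U else D := by
      simp only [stepsOfWalk, List.getElem_ofFn]
      rfl
    have hsucc : (w ⟨k+1, Nat.succ_lt_succ hk⟩ : ℕ) =
        (p.toList.take (k+1)).count U - (p.toList.take (k+1)).count D := rfl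
    have hcast : (w ⟨k, Nat.lt_succ_of_lt hk⟩ : ℕ) =
        (p.toList.take k).count U - (p.toList.take k).count D := rfl
    have hd1 := hDU k
    have hd2 := hDU (k+1)
    rw [hget]
    rcases (p.toList[k]'hk2).dichotomy with hu | hu <;> rw [hu] <;>
      rw [htake k hk, hu] at hsucc hd2 <;>
      simp only [List.count_append, List.count_singleton', beq_iff_eq, reduceCtorEq,
        if_true, if_false, ite_true, ite_false] at hsucc hd2
    · rw [if_pos (by omega)]
    · rw [if_neg (by omega)]

private lemma walkCount_eq_catalan (n : ℕ) : walkCount 0 (2*n) = catalan n := by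
  rw [walkCount, ← DyckWord.card_dyckWord_semilength_eq_catalan, ← Nat.card_eq_fintype_card]
  exact Nat.card_eq_of_bijective _ (walkToDyck_bijective n)

open Real Filter Stirling
open scoped Nat

private lemma catalan_formula {n : ℕ} (hn : 1 ≤ n) :
    (catalan n : ℝ) * √π * (n : ℝ) ^ ((3 : ℝ) / 2) / 4 ^ n
      = stirlingSeq (2*n) / stirlingSeq n ^ 2 * (√π * ((n:ℝ)/((n:ℝ)+1))) := by
  have npos : (0:ℝ) < n := by exact_mod_cast hn
  have s1pos : 0 < stirlingSeq n := by
    have := Stirling.stirlingSeq'_pos (n-1); rwa [Nat.sub_add_cancel hn] at this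
  have s2pos : 0 < stirlingSeq (2*n) := by
    have := Stirling.stirlingSeq'_pos (2*n-1); rwa [Nat.sub_add_cancel (by omega)] at this
  have qpos : (0:ℝ) < ((n:ℝ) / Real.exp 1) ^ n := by positivity
  have hcast2 : ((2*n:ℕ):ℝ) = 2*(n:ℝ) := by push_cast; ring
  have hfac : ∀ j : ℕ, 0 < j →
      (j ! : ℝ) = stirlingSeq j * (√(2 * (j:ℝ)) * ((j:ℝ)/Real.exp 1)^j) := by
    intro j hj
    have hjpos : (0:ℝ) < j := by exact_mod_cast hj
    rw [stirlingSeq]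
    field_simp
  have hC : (n.centralBinom : ℝ) * ((n ! : ℝ) * (n ! : ℝ)) = ((2*n)! : ℝ) := by
    have h := Nat.choose_mul_factorial_mul_factorial (show n ≤ 2*n by omega)
    rw [show 2*n - n = n by omega] at h
    rw [Nat.centralBinom, ← mul_assoc]
    exact_mod_cast h
  have hK : ((n:ℝ)+1) * (catalan n : ℝ) = (n.centralBinom : ℝ) := by
    exact_mod_cast succ_mul_catalan_eq_centralBinom n
  rw [hfac n (by omega), hfac (2*n) (by omega), hcast2] at hC
  have hsq2n : √(2*(n:ℝ)) * √(2*(n:ℝ)) = 2*(n:ℝ) := mul_self_sqrt (by positivity)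
  have hsqn : √(n:ℝ) * √(n:ℝ) = (n:ℝ) := mul_self_sqrt npos.le
  have hsq4 : √(2*(2*(n:ℝ))) = 2 * √(n:ℝ) := by
    rw [show 2*(2*(n:ℝ)) = (2*√(n:ℝ))^2 by rw [mul_pow, sq_sqrt npos.le]; ring]
    rw [Real.sqrt_sq (by positivity)]
  have hq2 : (2*(n:ℝ)/Real.exp 1)^(2*n) = 4^n * (((n:ℝ)/Real.exp 1)^n)^2 := by
    rw [show 2*(n:ℝ)/Real.exp 1 = 2 * ((n:ℝ)/Real.exp 1) by ring, mul_pow, ← pow_mul,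
      pow_mul 2 2 n]
    norm_num
    ring
  rw [hsq4, hq2] at hC
  have E1 : (n.centralBinom : ℝ) * stirlingSeq n ^ 2 * (n:ℝ)
      = stirlingSeq (2*n) * √(n:ℝ) * 4^n := by
    apply mul_right_cancel₀ (show (2 * (((n:ℝ)/Real.exp 1)^n) ^ 2 : ℝ) ≠ 0 from by positivity)
    calc (n.centralBinom : ℝ) * stirlingSeq n ^ 2 * (n:ℝ) * (2 * (((n:ℝ)/Real.exp 1)^n) ^ 2)
        = (n.centralBinom : ℝ) *
            (stirlingSeq n * (√(2*(n:ℝ)) * ((n:ℝ)/Real.exp 1)^n) *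
             (stirlingSeq n * (√(2*(n:ℝ)) * ((n:ℝ)/Real.exp 1)^n))) := by
          rw [show stirlingSeq n * (√(2*(n:ℝ)) * ((n:ℝ)/Real.exp 1)^n) *
             (stirlingSeq n * (√(2*(n:ℝ)) * ((n:ℝ)/Real.exp 1)^n))
             = stirlingSeq n ^2 * (√(2*(n:ℝ)) * √(2*(n:ℝ))) * (((n:ℝ)/Real.exp 1)^n) ^ 2 by ring,
            hsq2n]
          ring
      _ = stirlingSeq (2*n) * (2 * √(n:ℝ) * (4^n * (((n:ℝ)/Real.exp 1)^n)^2)) := hC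
      _ = stirlingSeq (2*n) * √(n:ℝ) * 4^n * (2 * (((n:ℝ)/Real.exp 1)^n) ^ 2) := by ring
  have h32 : (n:ℝ)^((3:ℝ)/2) = (n:ℝ) * √(n:ℝ) := by
    rw [show (3:ℝ)/2 = 1 + 1/2 by norm_num, rpow_add npos, rpow_one, ← sqrt_eq_rpow]
  rw [h32]
  have hcat : (catalan n : ℝ) = (n.centralBinom : ℝ) / ((n:ℝ)+1) := by
    field_simp [← hK]; linarith [hK]
  have hCB : (n.centralBinom : ℝ)
      = stirlingSeq (2*n) * √(n:ℝ) * 4^n / (stirlingSeq n ^ 2 * (n:ℝ)) := by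
    rw [← E1]; field_simp
  rw [hcat, hCB]
  have h4 : (0:ℝ) < (4:ℝ)^n := by positivity
  have hsqnpos : (0:ℝ) < √(n:ℝ) := Real.sqrt_pos.mpr npos
  field_simp
  ring_nf
  rw [Real.sq_sqrt npos.le]

private lemma catalan_tendsto :
    Tendsto (fun n : ℕ => (catalan n : ℝ) * √π * (n : ℝ) ^ ((3 : ℝ) / 2) / 4 ^ n)
      atTop (nhds 1) := by
  have h2 : Tendsto (fun n : ℕ => 2*n) atTop atTop :=
    tendsto_atTop_mono (fun n => by simp; omega) tendsto_id
  have h2n : Tendsto (fun n : ℕ => stirlingSeq (2*n)) atTop (nhds (√π)) :=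
    Stirling.tendsto_stirlingSeq_sqrt_pi.comp h2
  have hsq : Tendsto (fun n : ℕ => stirlingSeq n ^ 2) atTop (nhds ((√π)^2)) :=
    Stirling.tendsto_stirlingSeq_sqrt_pi.pow 2
  have hpi : ((√π)^2 : ℝ) ≠ 0 := by
    rw [sq_sqrt pi_pos.le]; exact pi_ne_zero
  have hfrac : Tendsto (fun n : ℕ => (n:ℝ)/((n:ℝ)+1)) atTop (nhds 1) :=
    tendsto_natCast_div_add_atTop (1:ℝ)
  have hR : Tendsto (fun n : ℕ =>
      stirlingSeq (2*n) / stirlingSeq n ^ 2 * (√π * ((n:ℝ)/((n:ℝ)+1))))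
      atTop (nhds (√π/(√π)^2 * (√π * 1))) :=
    (h2n.div hsq hpi).mul (tendsto_const_nhds.mul hfrac)
  have hval : √π/(√π)^2 * (√π * 1) = 1 := by
    rw [mul_one, sq]
    have : √π ≠ 0 := by positivity
    field_simp
  rw [hval] at hR
  apply hR.congr'
  filter_upwards [eventually_ge_atTop 1] with n hn
  exact (catalan_formula hn).symm

open Filter in
theorem excursion_asymptotics :
    Tendsto
      (fun n : ℕ =>
        (walkCount 0 (2 * n) : ℝ) * Real.sqrt Real.pi * (n : ℝ) ^ ((3 : ℝ) / 2) / 4 ^ n)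
      atTop (nhds 1) := by
  apply catalan_tendsto.congr
  intro n
  rw [walkCount_eq_catalan]
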